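/- Let G be a graph with n vertices and let k < n. If G has no k-block, then there exists a set S of at most 4(n−k)−1 separations of G, each of order less than k, such that among any k vertices of G some two are separated by a separation in S. -/

import Mathlib

variable {V : Type*}

/-- `S` separates `u` from `v` in `G`: neither lies in `S` and every walk meets `S`. -/
def SepBy (G : SimpleGraph V) (S : Set V) (u v : V) : Prop :=
  u ∉ S ∧ v ∉ S ∧ ∀ p : G.Walk u v, ∃ w ∈ p.support, w ∈ S

/-- `X` is (≤k)-inseparable: no set of at most `k` vertices separates two of its vertices. -/
def Insep (G : SimpleGraph V) (k : ℕ) (X : Set V) : Prop :=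
  ∀ S : Finset V, S.card ≤ k → ∀ u ∈ X, ∀ v ∈ X, ¬ SepBy G (S : Set V) u v

/-- A `k`-block: a maximal (≤(k-1))-inseparable set of at least `k` vertices. -/
def IsBlockN (G : SimpleGraph V) (k : ℕ) (B : Set V) : Prop :=
  k ≤ B.ncard ∧ Insep G (k - 1) B ∧
    ∀ B' : Set V, B ⊆ B' → Insep G (k - 1) B' → B' = B

/-- `(A,B)` is a separation of `G`. -/
def IsSepn (G : SimpleGraph V) (A B : Set V) : Prop :=
  A ∪ B = Set.univ ∧ ∀ a ∈ A \ B, ∀ b ∈ B \ A, ¬ G.Adj a b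

/-- A separation is proper if neither side contains the other. -/
def ProperSep (A B : Set V) : Prop := ¬ A ⊆ B ∧ ¬ B ⊆ A

/-- `G` is `k`-connected. -/
def KConn (G : SimpleGraph V) [Fintype V] (k : ℕ) : Prop :=
  k < Fintype.card V ∧ ∀ S : Finset V, S.card < k → ∀ u v : V, ¬ SepBy G (S : Set V) u v

lemma lem0 [Fintype V] (G : SimpleGraph V) (k : ℕ)
    (hno : ¬ ∃ B : Set V, IsBlockN G k B) :
    ∀ X : Set V, Insep G (k - 1) X → X.ncard < k := by
  intro X hX
  by_contra h
  push_neg at h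
  set F : Set (Set V) := {Y | X ⊆ Y ∧ Insep G (k - 1) Y} with hF
  have hFfin : F.Finite := Set.toFinite F
  obtain ⟨B, hBF, hmax0⟩ := Set.Finite.exists_maximalFor Set.ncard F hFfin ⟨X, subset_rfl, hX⟩
  have hmax : ∀ B' ∈ F, B.ncard ≤ B'.ncard → B.ncard = B'.ncard :=
    fun B' h1 h2 => le_antisymm h2 (hmax0 h1 h2)
  refine hno ⟨B, le_trans h (Set.ncard_le_ncard hBF.1 B.toFinite), hBF.2, ?_⟩
  intro B' hBB' hB'
  have hB'F : B' ∈ F := ⟨hBF.1.trans hBB', hB'⟩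
  have := hmax B' hB'F (Set.ncard_le_ncard hBB' B'.toFinite)
  exact (Set.eq_of_subset_of_ncard_le hBB' this.ge B'.toFinite).symm

lemma lemA [Fintype V] (G : SimpleGraph V) (k : ℕ)
    (h0 : ∀ X : Set V, Insep G (k - 1) X → X.ncard < k)
    (T : Finset V) (hT : T.card = k) :
    ∃ A B : Set V, IsSepn G A B ∧ (A ∩ B).ncard < k ∧
      ∃ u ∈ T, ∃ v ∈ T, u ∈ A \ B ∧ v ∈ B \ A := by
  have hnI : ¬ Insep G (k - 1) (↑T : Set V) := by
    intro h
    have := h0 _ h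
    rw [Set.ncard_coe_finset, hT] at this
    exact lt_irrefl _ this
  unfold Insep at hnI
  push_neg at hnI
  obtain ⟨S₀, hcard, u, hu, v, hv, huS, hvS, hwalk⟩ := hnI
  have hk1 : 1 ≤ k := by
    rcases Nat.eq_zero_or_pos k with h | h
    · exfalso
      have : T = ∅ := Finset.card_eq_zero.mp (by omega)
      simp [this] at hu
    · exact h
  set R : Set V := {x | ∃ p : G.Walk u x, ∀ w ∈ p.support, w ∉ (↑S₀ : Set V)} with hR
  have huR : u ∈ R := ⟨SimpleGraph.Walk.nil, by intro w hw; simp at hw; subst hw; exact huS⟩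
  have hvR : v ∉ R := by
    rintro ⟨p, hp⟩
    obtain ⟨w, hws, hwS⟩ := hwalk p
    exact hp w hws hwS
  refine ⟨R ∪ ↑S₀, Rᶜ, ⟨?_, ?_⟩, ?_, u, hu, v, hv, ⟨?_, ?_⟩, ⟨?_, ?_⟩⟩
  · ext x; by_cases hx : x ∈ R <;> simp [hx]
  · rintro a ⟨haA, haB⟩ b ⟨hbB, hbA⟩ hadj
    simp only [Set.mem_compl_iff, not_not] at haB
    obtain ⟨p, hp⟩ := haB
    refine hbA (Or.inl ⟨p.concat hadj, ?_⟩)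
    intro w hw
    rw [SimpleGraph.Walk.support_concat, List.mem_append] at hw
    rcases hw with hw | hw
    · exact hp w hw
    · simp at hw; subst hw
      intro hbS; exact hbA (Or.inr hbS)
  · have hsub : (R ∪ ↑S₀) ∩ Rᶜ ⊆ (↑S₀ : Set V) := by
      rintro x ⟨hx1, hx2⟩
      rcases hx1 with hx | hx
      · exact absurd hx hx2
      · exact hx
    calc ((R ∪ ↑S₀) ∩ Rᶜ).ncard ≤ (↑S₀ : Set V).ncard :=
          Set.ncard_le_ncard hsub (Set.toFinite _)
      _ = S₀.card := Set.ncard_coe_finset _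
      _ < k := by omega
  · exact Or.inl huR
  · simp [huR]
  · exact hvR
  · rintro (h | h)
    · exact hvR h
    · exact hvS h

lemma lemB [Fintype V] (G : SimpleGraph V) (k : ℕ)
    (hA : ∀ T : Finset V, T.card = k → ∃ A B : Set V, IsSepn G A B ∧ (A ∩ B).ncard < k ∧
      ∃ u ∈ T, ∃ v ∈ T, u ∈ A \ B ∧ v ∈ B \ A) :
    ∀ U : Finset V, ∃ S : Finset (Set V × Set V),
      S.card ≤ (if k ≤ U.card then 2 * (U.card - k) + 1 else 0) ∧
      (∀ p ∈ S, IsSepn G p.1 p.2 ∧ (p.1 ∩ p.2).ncard < k) ∧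
      ∀ T : Finset V, T ⊆ U → T.card = k →
        ∃ u ∈ T, ∃ v ∈ T, ∃ p ∈ S,
          (u ∈ p.1 \ p.2 ∧ v ∈ p.2 \ p.1) ∨ (u ∈ p.2 \ p.1 ∧ v ∈ p.1 \ p.2) := by
  classical
  intro U
  induction U using Finset.strongInduction with
  | _ U IH =>
  by_cases hc : k ≤ U.card
  · obtain ⟨T₀, hT₀U, hT₀⟩ := Finset.exists_subset_card_eq hc
    obtain ⟨A, B, hsep, hord, u, hu, v, hv, huAB, hvBA⟩ := hA T₀ hT₀
    set U₁ : Finset V := U.filter (fun x => x ∉ A \ B) with hU₁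
    set U₂ : Finset V := U.filter (fun x => x ∉ B \ A) with hU₂
    have huU : u ∈ U := hT₀U hu
    have hvU : v ∈ U := hT₀U hv
    have hU₁ss : U₁ ⊂ U := by
      refine Finset.ssubset_iff_of_subset (Finset.filter_subset _ _) |>.mpr ⟨u, huU, ?_⟩
      simp only [hU₁, Finset.mem_filter, not_and, not_not]
      exact fun _ => huAB
    have hU₂ss : U₂ ⊂ U := by
      refine Finset.ssubset_iff_of_subset (Finset.filter_subset _ _) |>.mpr ⟨v, hvU, ?_⟩
      simp only [hU₂, Finset.mem_filter, not_and, not_not]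
      exact fun _ => hvBA
    obtain ⟨S₁, hS₁c, hS₁p, hS₁T⟩ := IH U₁ hU₁ss
    obtain ⟨S₂, hS₂c, hS₂p, hS₂T⟩ := IH U₂ hU₂ss
    refine ⟨insert (A, B) (S₁ ∪ S₂), ?_, ?_, ?_⟩
    · -- cardinality
      have hcard1 : (insert (A, B) (S₁ ∪ S₂)).card ≤ 1 + (S₁.card + S₂.card) := by
        calc (insert (A, B) (S₁ ∪ S₂)).card ≤ (S₁ ∪ S₂).card + 1 :=
              Finset.card_insert_le _ _
          _ ≤ S₁.card + S₂.card + 1 := by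
              have := Finset.card_union_le S₁ S₂; omega
          _ = 1 + (S₁.card + S₂.card) := by omega
      -- key inequality: U₁.card + U₂.card ≤ U.card + (k-1)
      have hunion : U₁ ∪ U₂ = U := by
        ext x
        simp only [Finset.mem_union, hU₁, hU₂, Finset.mem_filter]
        constructor
        · rintro (⟨h, _⟩ | ⟨h, _⟩) <;> exact h
        · intro hx
          by_cases hxA : x ∈ A \ B
          · exact Or.inr ⟨hx, fun h => h.2 hxA.1⟩
          · exact Or.inl ⟨hx, hxA⟩
      have hintsub : ∀ x ∈ U₁ ∩ U₂, x ∈ (A ∩ B) := by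
        intro x hx
        simp only [Finset.mem_inter, hU₁, hU₂, Finset.mem_filter] at hx
        have hxu : x ∈ A ∪ B := by rw [hsep.1]; trivial
        rcases hxu with h | h
        · exact ⟨h, by_contra fun hB => hx.1.2 ⟨h, hB⟩⟩
        · exact ⟨by_contra fun hA' => hx.2.2 ⟨h, hA'⟩, h⟩
      have hintcard : (U₁ ∩ U₂).card ≤ k - 1 := by
        have h1 : ((U₁ ∩ U₂ : Finset V) : Set V).ncard ≤ (A ∩ B).ncard :=
          Set.ncard_le_ncard (fun x hx => hintsub x hx) (Set.toFinite _)
        rw [Set.ncard_coe_finset] at h1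
        omega
      have hsum : U₁.card + U₂.card ≤ U.card + (k - 1) := by
        have := Finset.card_union_add_card_inter U₁ U₂
        rw [hunion] at this
        omega
      have h1c := Finset.card_lt_card hU₁ss
      have h2c := Finset.card_lt_card hU₂ss
      rw [if_pos hc]
      rcases le_or_gt k U₁.card with h1 | h1 <;> rcases le_or_gt k U₂.card with h2 | h2 <;>
        [(rw [if_pos h1] at hS₁c; rw [if_pos h2] at hS₂c);
         (rw [if_pos h1] at hS₁c; rw [if_neg (not_le.mpr h2)] at hS₂c);
         (rw [if_neg (not_le.mpr h1)] at hS₁c; rw [if_pos h2] at hS₂c);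
         (rw [if_neg (not_le.mpr h1)] at hS₁c; rw [if_neg (not_le.mpr h2)] at hS₂c)] <;>
        omega
    · intro p hp
      rcases Finset.mem_insert.mp hp with h | h
      · subst h; exact ⟨hsep, hord⟩
      · rcases Finset.mem_union.mp h with h | h
        · exact hS₁p p h
        · exact hS₂p p h
    · intro T hTU hTk
      by_cases hTA : ∃ x ∈ T, x ∈ A \ B
      · by_cases hTB : ∃ y ∈ T, y ∈ B \ A
        · obtain ⟨x, hxT, hxAB⟩ := hTA
          obtain ⟨y, hyT, hyBA⟩ := hTB
          exact ⟨x, hxT, y, hyT, (A, B), Finset.mem_insert_self _ _,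
            Or.inl ⟨hxAB, hyBA⟩⟩
        · push_neg at hTB
          have hTU₂ : T ⊆ U₂ := by
            intro x hx
            simp only [hU₂, Finset.mem_filter]
            exact ⟨hTU hx, hTB x hx⟩
          obtain ⟨u', hu', v', hv', p, hp, hsplit⟩ := hS₂T T hTU₂ hTk
          exact ⟨u', hu', v', hv', p,
            Finset.mem_insert_of_mem (Finset.mem_union_right _ hp), hsplit⟩
      · push_neg at hTA
        have hTU₁ : T ⊆ U₁ := by
          intro x hx
          simp only [hU₁, Finset.mem_filter]
          exact ⟨hTU hx, hTA x hx⟩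
        obtain ⟨u', hu', v', hv', p, hp, hsplit⟩ := hS₁T T hTU₁ hTk
        exact ⟨u', hu', v', hv', p,
          Finset.mem_insert_of_mem (Finset.mem_union_left _ hp), hsplit⟩
  · refine ⟨∅, by simp [hc], by simp, ?_⟩
    intro T hTU hTk
    exfalso
    exact hc (hTk ▸ Finset.card_le_card hTU)

theorem stmt14 [Fintype V] (G : SimpleGraph V) (k : ℕ) (hk : k < Fintype.card V)
    (hno : ¬ ∃ B : Set V, IsBlockN G k B) :
    ∃ S : Finset (Set V × Set V), S.card ≤ 4 * (Fintype.card V - k) - 1 ∧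
      (∀ p ∈ S, IsSepn G p.1 p.2 ∧ (p.1 ∩ p.2).ncard < k) ∧
      ∀ T : Finset V, T.card = k →
        ∃ u ∈ T, ∃ v ∈ T, ∃ p ∈ S,
          (u ∈ p.1 \ p.2 ∧ v ∈ p.2 \ p.1) ∨ (u ∈ p.2 \ p.1 ∧ v ∈ p.1 \ p.2) := by
  obtain ⟨S, hSc, hSp, hST⟩ := lemB G k (lemA G k (lem0 G k hno)) Finset.univ
  refine ⟨S, ?_, hSp, fun T hT => hST T (Finset.subset_univ T) hT⟩
  rw [Finset.card_univ] at hSc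
  rw [if_pos hk.le] at hSc
  omega
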